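/- Let (φ_k)_{k≥1} be positive definite functions on a countable group G with φ_k(1) = 1 and φ_k ≥ 0 (real nonnegative valued), and suppose that for an exhausting increasing sequence of finite sets K_k ⊆ G one has |φ_k(g) - 1| ≤ 2^{-k-1} δ² for all g ∈ K_k. Then the infinite pointwise product φ(g) = ∏_{k=1}^∞ φ_k(g) converges for every g ∈ G, φ is positive definite with φ(1) = 1, φ ≥ 0, and |φ(g) - 1| ≤ δ²/2 for all g ∈ K_1. -/

import Mathlib

open scoped ComplexOrder

def IsPosDefFn {G : Type*} [Group G] (φ : G → ℂ) : Prop :=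
  ∀ (n : ℕ) (g : Fin n → G) (c : Fin n → ℂ),
    0 ≤ ∑ i, ∑ j, c i * (starRingEnd ℂ) (c j) * φ ((g j)⁻¹ * g i)

lemma isPosDefFn_one {G : Type*} [Group G] : IsPosDefFn (fun _ : G => (1:ℂ)) := by
  intro n g c
  have h : ∑ i, ∑ j, c i * (starRingEnd ℂ) (c j) * (fun _ : G => (1:ℂ)) ((g j)⁻¹ * g i)
      = (starRingEnd ℂ) (∑ j, c j) * (∑ i, c i) := by
    simp only [mul_one, map_sum]
    rw [Finset.sum_mul_sum]
    rw [Finset.sum_comm]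
    exact Finset.sum_congr rfl fun i _ => Finset.sum_congr rfl fun j _ => by ring
  rw [h]
  exact star_mul_self_nonneg _

lemma posdef_symm_le_one {G : Type*} [Group G] {φ : G → ℂ}
    (hpd : IsPosDefFn φ) (hone : φ 1 = 1)
    (hreal : ∀ g, (φ g).im = 0 ∧ 0 ≤ (φ g).re) :
    ∀ g : G, φ g⁻¹ = φ g ∧ (φ g).re ≤ 1 := by
  intro g
  have h1 := hpd 2 ![1, g] ![1, Complex.I]
  have h2 := hpd 2 ![1, g] ![1, -1]
  simp only [Fin.sum_univ_two, Matrix.cons_val_zero, Matrix.cons_val_one, Matrix.head_cons,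
    inv_one, one_mul, mul_one, hone, map_one, map_neg, Complex.conj_I, Complex.le_def,
    inv_mul_cancel] at h1 h2
  obtain ⟨ha0, har⟩ := hreal g
  obtain ⟨hb0, hbr⟩ := hreal g⁻¹
  simp only [Complex.add_re, Complex.add_im, Complex.mul_re, Complex.mul_im, Complex.neg_re,
    Complex.neg_im, Complex.I_re, Complex.I_im, Complex.one_re, Complex.one_im, Complex.zero_re,
    Complex.zero_im, ha0, hb0] at h1 h2
  constructor
  · exact Complex.ext (by linarith [h1.2]) (by rw [ha0, hb0])
  · linarith [h2.1, h1.2]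

lemma posdef_matrix {G : Type*} [Group G] {φ : G → ℂ}
    (hpd : IsPosDefFn φ) (hsym : ∀ x : G, (starRingEnd ℂ) (φ x) = φ x⁻¹)
    {n : ℕ} (g : Fin n → G) :
    (Matrix.of fun i j => φ ((g j)⁻¹ * g i)).PosSemidef := by
  rw [Matrix.posSemidef_iff_dotProduct_mulVec]
  constructor
  · ext i j
    simp only [Matrix.conjTranspose_apply, Matrix.of_apply, RCLike.star_def, hsym,
      mul_inv_rev, inv_inv]
  · intro x
    have h := hpd n g (star x)
    have he : ∑ i, ∑ j, (star x) i * (starRingEnd ℂ) ((star x) j) * φ ((g j)⁻¹ * g i)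
        = dotProduct (star x) ((Matrix.of fun i j => φ ((g j)⁻¹ * g i)).mulVec x) := by
      simp only [dotProduct, Matrix.mulVec, Matrix.of_apply, Pi.star_apply,
        Finset.mul_sum]
      refine Finset.sum_congr rfl fun i _ => Finset.sum_congr rfl fun j _ => ?_
      simp only [RCLike.star_def, Complex.conj_conj]
      ring
    rwa [he] at h

lemma isPosDefFn_mul {G : Type*} [Group G] {φ ψ : G → ℂ}
    (hφ : IsPosDefFn φ) (hψ : IsPosDefFn ψ)
    (hsym : ∀ x : G, (starRingEnd ℂ) (ψ x) = ψ x⁻¹) :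
    IsPosDefFn (fun x => φ x * ψ x) := by
  intro n g c
  obtain ⟨B, hB⟩ : ∃ B : Matrix (Fin n) (Fin n) ℂ,
      (Matrix.of fun i j => ψ ((g j)⁻¹ * g i)) = Matrix.conjTranspose B * B := by
    classical
    open scoped MatrixOrder Matrix.Norms.L2Operator in
    obtain ⟨B, hB⟩ := CStarAlgebra.nonneg_iff_eq_star_mul_self.mp (posdef_matrix hψ hsym g).nonneg
    exact ⟨B, by rw [hB, Matrix.star_eq_conjTranspose]⟩
  have hM : ∀ i j, ψ ((g j)⁻¹ * g i) = ∑ k, (starRingEnd ℂ) (B k i) * B k j := by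
    intro i j
    have h := congrArg (fun M => M i j) hB
    simpa [Matrix.mul_apply, Matrix.conjTranspose_apply] using h
  set f : Fin n → Fin n → Fin n → ℂ := fun k i j => (c i * (starRingEnd ℂ) (B k i)) *
      (starRingEnd ℂ) (c j * (starRingEnd ℂ) (B k j)) * φ ((g j)⁻¹ * g i) with hf
  have key : ∑ i, ∑ j, c i * (starRingEnd ℂ) (c j) * (fun x => φ x * ψ x) ((g j)⁻¹ * g i)
      = ∑ k, ∑ i, ∑ j, f k i j := by
    have step1 : ∀ i j, c i * (starRingEnd ℂ) (c j) * (fun x => φ x * ψ x) ((g j)⁻¹ * g i)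
        = ∑ k, f k i j := by
      intro i j
      simp only
      rw [hM i j, Finset.mul_sum, Finset.mul_sum]
      refine Finset.sum_congr rfl fun k _ => ?_
      simp only [hf, map_mul, Complex.conj_conj]
      ring
    calc ∑ i, ∑ j, c i * (starRingEnd ℂ) (c j) * (fun x => φ x * ψ x) ((g j)⁻¹ * g i)
        = ∑ i, ∑ j, ∑ k, f k i j :=
          Finset.sum_congr rfl fun i _ => Finset.sum_congr rfl fun j _ => step1 i j
      _ = ∑ i, ∑ k, ∑ j, f k i j := Finset.sum_congr rfl fun i _ => Finset.sum_comm
      _ = ∑ k, ∑ i, ∑ j, f k i j := Finset.sum_comm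
  rw [key]
  exact Finset.sum_nonneg fun k _ => hφ n g _

lemma geom_half_sum : ∀ j : ℕ, ∑ k ∈ Finset.Icc 1 j, (2:ℝ)^(-(k:ℤ)-1) ≤ 1/2 := by
  have key : ∀ j : ℕ, ∑ k ∈ Finset.Icc 1 j, (2:ℝ)^(-(k:ℤ)-1) = 1/2 - (2:ℝ)^(-(j:ℤ)-1) := by
    intro j
    induction j with
    | zero => simp
    | succ j ih =>
      rw [Finset.sum_Icc_succ_top (Nat.le_add_left 1 j), ih]
      have h1 : (-(↑(j+1):ℤ) - 1) = (-(j:ℤ)-1) + (-1) := by push_cast; ring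
      rw [h1, zpow_add₀ (two_ne_zero)]
      ring
  intro j
  rw [key j]
  have : (0:ℝ) < (2:ℝ)^(-(j:ℤ)-1) := by positivity
  linarith


theorem posdef_infinite_product {G : Type*} [Group G] [Countable G]
    (φ : ℕ → G → ℂ) (δ : ℝ) (hδ : 0 < δ)
    (hpd : ∀ k, 1 ≤ k → IsPosDefFn (φ k))
    (hone : ∀ k, 1 ≤ k → φ k 1 = 1)
    (hreal : ∀ k, 1 ≤ k → ∀ g : G, (φ k g).im = 0 ∧ 0 ≤ (φ k g).re)
    (K : ℕ → Finset G) (hKmono : Monotone K)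
    (hKexh : ∀ g : G, ∃ k, g ∈ K k)
    (hsmall : ∀ k, 1 ≤ k → ∀ g ∈ K k, ‖φ k g - 1‖ ≤ 2 ^ (-(k : ℤ) - 1) * δ ^ 2) :
    ∃ Φ : G → ℂ,
      (∀ g : G, Filter.Tendsto (fun j : ℕ => ∏ k ∈ Finset.Icc 1 j, φ k g)
        Filter.atTop (nhds (Φ g))) ∧
      IsPosDefFn Φ ∧ Φ 1 = 1 ∧
      (∀ g : G, (Φ g).im = 0 ∧ 0 ≤ (Φ g).re) ∧
      (∀ g ∈ K 1, ‖Φ g - 1‖ ≤ δ ^ 2 / 2) := by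
  classical
  set f : ℕ → G → ℝ := fun k g => (φ k g).re with hf
  have hsym : ∀ k, 1 ≤ k → ∀ g : G, φ k g⁻¹ = φ k g ∧ (φ k g).re ≤ 1 :=
    fun k hk => posdef_symm_le_one (hpd k hk) (hone k hk) (hreal k hk)
  have hfc : ∀ k, 1 ≤ k → ∀ g : G, φ k g = ((f k g : ℝ) : ℂ) := by
    intro k hk g
    exact Complex.ext (by simp [hf]) (by simp [hf, (hreal k hk g).1])
  have hP : ∀ (j : ℕ) (g : G),
      (∏ k ∈ Finset.Icc 1 j, φ k g) = ((∏ k ∈ Finset.Icc 1 j, f k g : ℝ) : ℂ) := by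
    intro j g
    rw [Complex.ofReal_prod]
    exact Finset.prod_congr rfl fun k hk => hfc k (Finset.mem_Icc.mp hk).1 g
  have hf0 : ∀ k, 1 ≤ k → ∀ g, 0 ≤ f k g := fun k hk g => (hreal k hk g).2
  have hf1 : ∀ k, 1 ≤ k → ∀ g, f k g ≤ 1 := fun k hk g => (hsym k hk g).2
  set Q : ℕ → G → ℝ := fun j g => ∏ k ∈ Finset.Icc 1 j, f k g with hQ
  have hQ0 : ∀ j g, 0 ≤ Q j g :=
    fun j g => Finset.prod_nonneg fun k hk => hf0 k (Finset.mem_Icc.mp hk).1 g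
  have hQ1 : ∀ j g, Q j g ≤ 1 :=
    fun j g => Finset.prod_le_one (fun k hk => hf0 k (Finset.mem_Icc.mp hk).1 g)
      (fun k hk => hf1 k (Finset.mem_Icc.mp hk).1 g)
  have hQzero : ∀ g, Q 0 g = 1 := by
    intro g; simp [hQ, Finset.Icc_eq_empty (by norm_num : ¬ (1:ℕ) ≤ 0)]
  have hQsucc : ∀ j g, Q (j+1) g = Q j g * f (j+1) g :=
    fun j g => Finset.prod_Icc_succ_top (Nat.le_add_left 1 j) _
  have hanti : ∀ g, Antitone fun j => Q j g := by
    intro g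
    refine antitone_nat_of_succ_le fun j => ?_
    rw [hQsucc]
    exact mul_le_of_le_one_right (hQ0 j g) (hf1 (j+1) (Nat.le_add_left 1 j) g)
  set L : G → ℝ := fun g => ⨅ j, Q j g with hL
  have hbdd : ∀ g, BddBelow (Set.range fun j => Q j g) := by
    intro g
    exact ⟨0, by rintro x ⟨j, rfl⟩; exact hQ0 j g⟩
  have htendsQ : ∀ g, Filter.Tendsto (fun j => Q j g) Filter.atTop (nhds (L g)) :=
    fun g => tendsto_atTop_ciInf (hanti g) (hbdd g)
  have hL0 : ∀ g, 0 ≤ L g := fun g => le_ciInf fun j => hQ0 j g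
  have hLle : ∀ g, L g ≤ 1 := fun g => le_trans (ciInf_le (hbdd g) 0) (le_of_eq (hQzero g))
  have hconv : ∀ g : G, Filter.Tendsto (fun j : ℕ => ∏ k ∈ Finset.Icc 1 j, φ k g)
      Filter.atTop (nhds ((L g : ℝ) : ℂ)) := by
    intro g
    have h := (Complex.continuous_ofReal.tendsto (L g)).comp (htendsQ g)
    exact Filter.Tendsto.congr (fun j => (hP j g).symm) h
  refine ⟨fun g => ((L g : ℝ) : ℂ), hconv, ?_, ?_, ?_, ?_⟩
  · -- IsPosDefFn
    intro n g c
    have hpdQ : ∀ j, IsPosDefFn (fun x => ∏ k ∈ Finset.Icc 1 j, φ k x) := by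
      intro j
      induction j with
      | zero =>
        have : (fun x : G => ∏ k ∈ Finset.Icc 1 0, φ k x) = fun _ : G => (1:ℂ) := by
          funext x; simp [Finset.Icc_eq_empty (by norm_num : ¬ (1:ℕ) ≤ 0)]
        rw [this]; exact isPosDefFn_one
      | succ j ih =>
        have heq : (fun x : G => ∏ k ∈ Finset.Icc 1 (j+1), φ k x)
            = fun x => (∏ k ∈ Finset.Icc 1 j, φ k x) * φ (j+1) x :=
          funext fun x => Finset.prod_Icc_succ_top (Nat.le_add_left 1 j) _
        rw [heq]
        refine isPosDefFn_mul ih (hpd (j+1) (Nat.le_add_left 1 j)) (fun x => ?_)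
        have h1 := (hsym (j+1) (Nat.le_add_left 1 j) x).1
        have him := (hreal (j+1) (Nat.le_add_left 1 j) x).1
        rw [← h1]
        exact Complex.ext (by simp) (by simp [(hreal (j+1) (Nat.le_add_left 1 j) x⁻¹).1])
    have hS : ∀ j : ℕ, (0:ℂ) ≤ ∑ i, ∑ j', c i * (starRingEnd ℂ) (c j') *
        ∏ k ∈ Finset.Icc 1 j, φ k ((g j')⁻¹ * g i) := fun j => hpdQ j n g c
    have htend : Filter.Tendsto (fun j : ℕ => ∑ i, ∑ j', c i * (starRingEnd ℂ) (c j') *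
        ∏ k ∈ Finset.Icc 1 j, φ k ((g j')⁻¹ * g i)) Filter.atTop
        (nhds (∑ i, ∑ j', c i * (starRingEnd ℂ) (c j') * ((L ((g j')⁻¹ * g i) : ℝ) : ℂ))) := by
      refine tendsto_finset_sum _ fun i _ => tendsto_finset_sum _ fun j' _ => ?_
      exact (hconv ((g j')⁻¹ * g i)).const_mul _
    rw [Complex.le_def]
    constructor
    · refine ge_of_tendsto' ((Complex.continuous_re.tendsto _).comp htend) fun j => ?_
      have := (Complex.le_def.mp (hS j)).1
      simpa using this
    · have h1 := (Complex.continuous_im.tendsto _).comp htend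
      have h2 : ∀ j : ℕ, (∑ i, ∑ j', c i * (starRingEnd ℂ) (c j') *
          ∏ k ∈ Finset.Icc 1 j, φ k ((g j')⁻¹ * g i)).im = 0 :=
        fun j => ((Complex.le_def.mp (hS j)).2).symm
      have h3 : Filter.Tendsto (fun _ : ℕ => (0:ℝ)) Filter.atTop
          (nhds ((∑ i, ∑ j', c i * (starRingEnd ℂ) (c j') *
            ((L ((g j')⁻¹ * g i) : ℝ) : ℂ)).im)) := by
        refine h1.congr fun j => ?_
        simp only [Function.comp]
        exact h2 j
      have := tendsto_nhds_unique h3 tendsto_const_nhds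
      simpa using this.symm
  · -- Φ 1 = 1
    have : ∀ j, Q j 1 = 1 := by
      intro j
      refine Finset.prod_eq_one fun k hk => ?_
      have hk1 := (Finset.mem_Icc.mp hk).1
      simp [hf, hone k hk1]
    have hL1 : L 1 = 1 := by
      rw [hL]
      simp only [this]
      exact ciInf_const
    simp [hL1]
  · intro g
    exact ⟨Complex.ofReal_im _, by simpa using hL0 g⟩
  · -- K 1 bound
    intro g hg
    have hgK : ∀ k, 1 ≤ k → g ∈ K k := fun k hk => hKmono hk hg
    have hfl : ∀ k : ℕ, 1 ≤ k → 1 - 2^(-(k:ℤ)-1) * δ^2 ≤ f k g := by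
      intro k hk
      have h := hsmall k hk g (hgK k hk)
      have habs : |f k g - 1| ≤ 2^(-(k:ℤ)-1) * δ^2 := by
        refine le_trans ?_ h
        have h2 := Complex.abs_re_le_norm (φ k g - 1)
        simpa [hf, Complex.sub_re] using h2
      linarith [(abs_le.mp habs).1]
    have key : ∀ j : ℕ, 1 - (∑ k ∈ Finset.Icc 1 j, (2:ℝ)^(-(k:ℤ)-1)) * δ^2 ≤ Q j g := by
      intro j
      induction j with
      | zero => simp [hQzero g, Finset.Icc_eq_empty (by norm_num : ¬ (1:ℕ) ≤ 0)]
      | succ j ih =>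
        rw [hQsucc, Finset.sum_Icc_succ_top (Nat.le_add_left 1 j)]
        have hε : (0:ℝ) ≤ (2:ℝ)^(-(↑(j+1):ℤ)-1) := by positivity
        have hfb := hfl (j+1) (Nat.le_add_left 1 j)
        have hmul := mul_le_mul_of_nonneg_left hfb (hQ0 j g)
        have hnn : 0 ≤ (2:ℝ)^(-(↑(j+1):ℤ)-1) * δ^2 * (1 - Q j g) :=
          mul_nonneg (mul_nonneg hε (sq_nonneg δ)) (sub_nonneg.mpr (hQ1 j g))
        nlinarith [hQ0 j g]
    have hLlower : 1 - δ^2/2 ≤ L g := by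
      refine le_ciInf fun j => ?_
      refine le_trans ?_ (key j)
      have hs := geom_half_sum j
      nlinarith [sq_nonneg δ]
    have habs : ‖((L g : ℝ) : ℂ) - 1‖ = |L g - 1| := by
      rw [show (((L g : ℝ) : ℂ) - 1) = ((L g - 1 : ℝ) : ℂ) by push_cast; ring]
      rw [Complex.norm_real, Real.norm_eq_abs]
    rw [habs, abs_le]
    constructor <;> [linarith [hLlower]; linarith [hLle g, sq_nonneg δ]]
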